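/- Under 2-recurring tasks (x_t = x_{t+2}) with unit-norm linearly independent x_1, x_2 and c := (x_1ᵀx_2)² ≠ 1, the iterates θ^t = θ^{t-1} - γ_t(x_tᵀθ^{t-1} - x_tᵀθ*)x_t with θ^0 = 0 and alternating stepsizes γ_t = 1 for odd t and γ_t = 1/(1-c) for even t satisfy θ^3 = θ*, where θ* is the minimum-norm solution of y_i = x_iᵀθ for i = 1,2. -/
import Mathlib


open Matrix

/-- Under 2-recurring tasks (`x₃ = x₁`) with unit-norm linearly independent `x₁, x₂` and
`c := (x₁ᵀx₂)² ≠ 1`, the LMS-type iterates `θ^t = θ^{t-1} - γ_t(x_tᵀθ^{t-1} - y_t)x_t`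
with `θ^0 = 0` and alternating stepsizes `γ_t = 1` for odd `t`, `γ_t = 1/(1-c)` for even `t`,
satisfy `θ^3 = θ*`, where `θ*` is the minimum-norm solution of `y_i = x_iᵀθ`, `i = 1,2`
(i.e. the unique solution lying in `Span(x₁, x₂)`). -/
theorem alternating_stepsize_converges_at_three {d : ℕ} (x₁ x₂ : Fin d → ℝ)
    (h1 : x₁ ⬝ᵥ x₁ = 1) (h2 : x₂ ⬝ᵥ x₂ = 1)
    (hli : LinearIndependent ℝ ![x₁, x₂])
    (c : ℝ) (hc : c = (x₁ ⬝ᵥ x₂) ^ 2) (hc1 : c ≠ 1)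
    (y₁ y₂ : ℝ) (θstar : Fin d → ℝ)
    (hstar_span : θstar ∈ Submodule.span ℝ {x₁, x₂})
    (hy1 : y₁ = x₁ ⬝ᵥ θstar) (hy2 : y₂ = x₂ ⬝ᵥ θstar)
    (θ0 θ1 θ2 θ3 : Fin d → ℝ)
    (h0 : θ0 = 0)
    (hθ1 : θ1 = θ0 - ((1 : ℝ) * (x₁ ⬝ᵥ θ0 - y₁)) • x₁)
    (hθ2 : θ2 = θ1 - ((1 / (1 - c)) * (x₂ ⬝ᵥ θ1 - y₂)) • x₂)
    (hθ3 : θ3 = θ2 - ((1 : ℝ) * (x₁ ⬝ᵥ θ2 - y₁)) • x₁) :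
    θ3 = θstar := by
  rw [Submodule.mem_span_pair] at hstar_span
  obtain ⟨a, b, hab⟩ := hstar_span
  have hcne : (1 : ℝ) - c ≠ 0 := fun h => hc1 (by linarith)
  set s : ℝ := x₁ ⬝ᵥ x₂ with hs
  have hs' : x₂ ⬝ᵥ x₁ = s := dotProduct_comm x₂ x₁
  subst hab hy1 hy2 h0 hθ1 hθ2 hθ3 hc
  simp only [dotProduct_zero, dotProduct_add, dotProduct_smul, dotProduct_sub,
    smul_eq_mul, h1, h2, hs', ← hs]
  match_scalars <;> field_simp <;> ring
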